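/- (Existence of the attractor.) Assume that S(h) : Φ → Φ is continuous for every h ∈ 𝒞 and that the semigroup possesses a compact (𝔹,Σ)-attracting set K ⊆ Φ. Then there exists a (𝔹,Σ)-attractor 𝒜 of the semigroup with 𝒜 ⊆ K, namely 𝒜 = closure( ⋃_{B ∈ 𝔹} ω(B) ) is such an attractor. -/
import Mathlib


open Metric Filter Topology

noncomputable section

/-- The ω-limit set of a set `B` under the multi-parametric semigroup `S`
with time arrow `Sig`. -/
def omegaSet {m : ℕ} {Φ : Type*} [MetricSpace Φ]
    (S : EuclideanSpace ℝ (Fin m) → Φ → Φ) (Sig : Set (EuclideanSpace ℝ (Fin m)))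
    (B : Set Φ) : Set Φ :=
  {u₀ | ∃ (h : ℕ → EuclideanSpace ℝ (Fin m)) (u : ℕ → Φ),
    (∀ n, h n ∈ Sig) ∧
    Tendsto (fun n => infDist (h n) (frontier Sig)) atTop atTop ∧
    (∀ n, u n ∈ B) ∧
    Tendsto (fun n => S (h n) (u n)) atTop (𝓝 u₀)}

/-- `K` is a `(𝔹,Σ)`-attracting set for the semigroup `S`. -/
def IsAttractingSet {m : ℕ} {Φ : Type*} [MetricSpace Φ]
    (S : EuclideanSpace ℝ (Fin m) → Φ → Φ) (Sig : Set (EuclideanSpace ℝ (Fin m)))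
    (Bor : Set (Set Φ)) (K : Set Φ) : Prop :=
  ∀ B ∈ Bor, ∀ ε : ℝ, 0 < ε → ∃ D : ℝ, 0 < D ∧
    ∀ h ∈ Sig, infDist h (frontier Sig) ≥ D → S h '' B ⊆ thickening ε K

/-- `A` is a `(𝔹,Σ)`-attractor: compact, strictly invariant and `(𝔹,Σ)`-attracting. -/
def IsAttractor {m : ℕ} {Φ : Type*} [MetricSpace Φ]
    (S : EuclideanSpace ℝ (Fin m) → Φ → Φ) (C Sig : Set (EuclideanSpace ℝ (Fin m)))
    (Bor : Set (Set Φ)) (A : Set Φ) : Prop :=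
  IsCompact A ∧ (∀ h ∈ C, S h '' A = A) ∧ IsAttractingSet S Sig Bor A

/-- If `g ∈ Sig` is at distance `≥ D` from the frontier of `Sig`, then any point at
distance `< D` from `g` is still in `Sig`, with a quantitative bound on its distance
to the frontier. -/
private lemma sig_ball_mem {m : ℕ} {Sig : Set (EuclideanSpace ℝ (Fin m))}
    {g g' : EuclideanSpace ℝ (Fin m)} {D : ℝ}
    (hg : g ∈ Sig) (hD : D ≤ infDist g (frontier Sig)) (hd : dist g' g < D) :
    g' ∈ Sig ∧ D - dist g' g ≤ infDist g' (frontier Sig) := by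
  have hD0 : 0 < D := lt_of_le_of_lt dist_nonneg hd
  have hgF : g ∉ frontier Sig := by
    intro hmem
    have h0 : infDist g (frontier Sig) = 0 := infDist_zero_of_mem hmem
    rw [h0] at hD; linarith
  have hball : ∀ x ∈ ball g D, x ∉ frontier Sig := by
    intro x hx hxf
    have h1 : infDist g (frontier Sig) ≤ dist g x := infDist_le_dist_of_mem hxf
    rw [mem_ball, dist_comm] at hx
    linarith
  have hgc : g ∈ closure Sig := subset_closure hg
  have hgi : g ∈ interior Sig := by
    have := closure_eq_interior_union_frontier Sig
    rw [this] at hgc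
    exact hgc.resolve_right hgF
  have hsub : ball g D ⊆ interior Sig := by
    have hcover : ball g D ⊆ interior Sig ∪ (closure Sig)ᶜ := by
      intro x hx
      by_cases hxc : x ∈ closure Sig
      · left
        have := closure_eq_interior_union_frontier Sig
        rw [this] at hxc
        exact hxc.resolve_right (hball x hx)
      · right; exact hxc
    intro y hy
    by_contra hyni
    have h2 : (ball g D ∩ (closure Sig)ᶜ).Nonempty :=
      ⟨y, hy, (hcover hy).resolve_left hyni⟩
    have h1 : (ball g D ∩ interior Sig).Nonempty := ⟨g, mem_ball_self hD0, hgi⟩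
    obtain ⟨z, _, hzi, hzc⟩ := (convex_ball g D).isPreconnected _ _ isOpen_interior
      isClosed_closure.isOpen_compl hcover h1 h2
    exact hzc (subset_closure (interior_subset hzi))
  have hg' : g' ∈ Sig := interior_subset (hsub (mem_ball.2 hd))
  refine ⟨hg', ?_⟩
  have h3 : infDist g (frontier Sig) ≤ infDist g' (frontier Sig) + dist g g' :=
    infDist_le_infDist_add_dist
  rw [dist_comm] at h3
  linarith

/-- Extraction of a convergent subsequence from a sequence whose distance to a compact
set tends to zero. -/
private lemma subseq_of_infDist {Φ : Type*} [MetricSpace Φ] {K : Set Φ}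
    (hK : IsCompact K) (hKne : K.Nonempty) (v : ℕ → Φ)
    (hv : ∀ ε : ℝ, 0 < ε → ∃ N, ∀ n ≥ N, infDist (v n) K < ε) :
    ∃ x ∈ K, ∃ φ : ℕ → ℕ, StrictMono φ ∧ Tendsto (v ∘ φ) atTop (𝓝 x) := by
  have hw : ∀ n, ∃ y ∈ K, infDist (v n) K = dist (v n) y := fun n =>
    hK.exists_infDist_eq_dist hKne (v n)
  choose w hwK hwd using hw
  obtain ⟨x, hxK, φ, hφ, hwlim⟩ := hK.tendsto_subseq hwK
  refine ⟨x, hxK, φ, hφ, ?_⟩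
  rw [Metric.tendsto_atTop]
  intro ε hε
  obtain ⟨N1, hN1⟩ := hv (ε/2) (by linarith)
  obtain ⟨N2, hN2⟩ := (Metric.tendsto_atTop.1 hwlim) (ε/2) (by linarith)
  refine ⟨max N1 N2, fun n hn => ?_⟩
  have hφn : N1 ≤ φ n := le_trans (le_trans (le_max_left _ _) hn) hφ.le_apply
  have d1 : dist (v (φ n)) (w (φ n)) < ε/2 := by
    rw [← hwd]; exact hN1 _ hφn
  have d2 : dist (w (φ n)) x < ε/2 := hN2 n (le_trans (le_max_right _ _) hn)
  calc dist ((v ∘ φ) n) x ≤ dist (v (φ n)) (w (φ n)) + dist (w (φ n)) x :=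
        dist_triangle _ _ _
    _ < ε := by linarith

/-- Existence of the `(𝔹,Σ)`-attractor: if all `S h` are continuous and there is a compact
`(𝔹,Σ)`-attracting set `K`, then `𝒜 = closure (⋃_{B ∈ 𝔹} ω(B))` is a `(𝔹,Σ)`-attractor
contained in `K`. -/
theorem exists_attractor
    {m : ℕ} {Φ : Type*} [MetricSpace Φ] (hm : 1 ≤ m)
    (C Sig : Set (EuclideanSpace ℝ (Fin m)))
    (S : EuclideanSpace ℝ (Fin m) → Φ → Φ) (Bor : Set (Set Φ))
    (hCclosed : IsClosed C) (hCint : (interior C).Nonempty)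
    (hC0 : (0 : EuclideanSpace ℝ (Fin m)) ∈ C)
    (hCadd : ∀ h₁ ∈ C, ∀ h₂ ∈ C, h₁ + h₂ ∈ C)
    (hCcone : ∀ t : ℝ, 0 ≤ t → ∀ h ∈ C, t • h ∈ C)
    (hS0 : S 0 = id)
    (hSadd : ∀ h₁ ∈ C, ∀ h₂ ∈ C, S (h₁ + h₂) = S h₁ ∘ S h₂)
    (hScont : ∀ h ∈ C, Continuous (S h))
    (hSigne : Sig.Nonempty) (hSigC : Sig ⊆ C)
    (hfr : frontier C ⊆ frontier Sig)
    (hcof : ∀ D : ℝ, 0 < D → ∃ h ∈ Sig, infDist h (frontier Sig) ≥ D)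
    (K : Set Φ) (hK : IsCompact K) (hKattr : IsAttractingSet S Sig Bor K) :
    closure (⋃ B ∈ Bor, omegaSet S Sig B) ⊆ K ∧
    IsAttractor S C Sig Bor (closure (⋃ B ∈ Bor, omegaSet S Sig B)) := by
  -- Step 1: every ω-limit set is contained in K
  have homega_K : ∀ B ∈ Bor, omegaSet S Sig B ⊆ K := by
    intro B hB u₀ hu₀
    obtain ⟨h, u, hhSig, hhinf, huB, hlim⟩ := hu₀
    have hKne : K.Nonempty := by
      obtain ⟨D, hD, hatt⟩ := hKattr B hB 1 one_pos
      obtain ⟨n, hn⟩ := (hhinf.eventually_ge_atTop D).exists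
      obtain ⟨z, hz, -⟩ := mem_thickening_iff.1
        (hatt (h n) (hhSig n) hn ⟨u n, huB n, rfl⟩)
      exact ⟨z, hz⟩
    have hle : ∀ ε : ℝ, 0 < ε → infDist u₀ K ≤ 0 + ε := by
      intro ε hε
      obtain ⟨D, hD, hatt⟩ := hKattr B hB ε hε
      have hev : ∀ᶠ n in atTop, infDist (S (h n) (u n)) K ≤ ε := by
        filter_upwards [hhinf.eventually_ge_atTop D] with n hn
        obtain ⟨z, hz, hdz⟩ := mem_thickening_iff.1
          (hatt (h n) (hhSig n) hn ⟨u n, huB n, rfl⟩)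
        exact le_of_lt (lt_of_le_of_lt (infDist_le_dist_of_mem hz) hdz)
      have hcont : Tendsto (fun n => infDist (S (h n) (u n)) K) atTop
          (𝓝 (infDist u₀ K)) := ((continuous_infDist_pt K).tendsto u₀).comp hlim
      rw [zero_add]
      exact le_of_tendsto hcont hev
    have h0 : infDist u₀ K = 0 :=
      le_antisymm (le_of_forall_pos_le_add hle) infDist_nonneg
    have := (mem_closure_iff_infDist_zero hKne).2 h0
    rwa [hK.isClosed.closure_eq] at this
  -- Step 2: strict invariance of each ω-limit set
  have hSinv : ∀ B ∈ Bor, ∀ h ∈ C, S h '' omegaSet S Sig B = omegaSet S Sig B := by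
    intro B hB h hhC
    apply Set.Subset.antisymm
    · -- forward inclusion
      rintro _ ⟨u₀, hu₀, rfl⟩
      obtain ⟨g, u, hgSig, hginf, huB, hlim⟩ := hu₀
      obtain ⟨N, hN⟩ := eventually_atTop.1 (hginf.eventually_ge_atTop (‖h‖ + 1))
      have hdist : ∀ k, dist (h + g k) (g k) = ‖h‖ := fun k => by
        simp [dist_eq_norm]
      have hmem : ∀ n : ℕ, (h + g (n + N)) ∈ Sig ∧
          infDist (g (n + N)) (frontier Sig) - dist (h + g (n + N)) (g (n + N)) ≤
            infDist (h + g (n + N)) (frontier Sig) := by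
        intro n
        refine sig_ball_mem (hgSig (n + N)) le_rfl ?_
        rw [hdist]
        linarith [hN (n + N) (Nat.le_add_left N n)]
      refine ⟨fun n => h + g (n + N), fun n => u (n + N), fun n => (hmem n).1, ?_,
        fun n => huB (n + N), ?_⟩
      · have hcomp : Tendsto (fun n => infDist (g (n + N)) (frontier Sig)) atTop atTop :=
          hginf.comp (tendsto_add_atTop_nat N)
        have hlow : Tendsto (fun n => infDist (g (n + N)) (frontier Sig) - ‖h‖)
            atTop atTop :=
          (tendsto_atTop_add_const_right atTop (-‖h‖) hcomp).congr
            (fun n => (sub_eq_add_neg _ _).symm)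
        refine tendsto_atTop_mono (fun n => ?_) hlow
        have h2 := (hmem n).2
        rw [hdist] at h2
        linarith
      · have hlim' : Tendsto (fun n => S (g (n + N)) (u (n + N))) atTop (𝓝 u₀) :=
          hlim.comp (tendsto_add_atTop_nat N)
        have hcomp := ((hScont h hhC).tendsto u₀).comp hlim'
        refine hcomp.congr (fun n => ?_)
        rw [hSadd h hhC (g (n + N)) (hSigC (hgSig (n + N)))]
        rfl
    · -- backward inclusion
      intro u₀ hu₀
      have hu₀K : u₀ ∈ K := homega_K B hB hu₀
      have hKne : K.Nonempty := ⟨u₀, hu₀K⟩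
      obtain ⟨g, u, hgSig, hginf, huB, hlim⟩ := hu₀
      obtain ⟨N, hN⟩ := eventually_atTop.1 (hginf.eventually_ge_atTop (‖h‖ + 1))
      have hdist : ∀ k, dist (g k - h) (g k) = ‖h‖ := fun k => by
        simp [dist_eq_norm]
      have hmem : ∀ n : ℕ, (g (n + N) - h) ∈ Sig ∧
          infDist (g (n + N)) (frontier Sig) - dist (g (n + N) - h) (g (n + N)) ≤
            infDist (g (n + N) - h) (frontier Sig) := by
        intro n
        refine sig_ball_mem (hgSig (n + N)) le_rfl ?_
        rw [hdist]
        linarith [hN (n + N) (Nat.le_add_left N n)]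
      have hGinf : Tendsto (fun n => infDist (g (n + N) - h) (frontier Sig))
          atTop atTop := by
        have hcomp : Tendsto (fun n => infDist (g (n + N)) (frontier Sig)) atTop atTop :=
          hginf.comp (tendsto_add_atTop_nat N)
        have hlow : Tendsto (fun n => infDist (g (n + N)) (frontier Sig) - ‖h‖)
            atTop atTop :=
          (tendsto_atTop_add_const_right atTop (-‖h‖) hcomp).congr
            (fun n => (sub_eq_add_neg _ _).symm)
        refine tendsto_atTop_mono (fun n => ?_) hlow
        have h2 := (hmem n).2
        rw [hdist] at h2
        linarith
      have hVd : ∀ ε : ℝ, 0 < ε → ∃ M, ∀ n ≥ M,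
          infDist (S (g (n + N) - h) (u (n + N))) K < ε := by
        intro ε hε
        obtain ⟨D, hD, hatt⟩ := hKattr B hB ε hε
        obtain ⟨M, hM⟩ := eventually_atTop.1 (hGinf.eventually_ge_atTop D)
        refine ⟨M, fun n hn => ?_⟩
        obtain ⟨z, hz, hdz⟩ := mem_thickening_iff.1
          (hatt _ ((hmem n).1) (hM n hn) ⟨u (n + N), huB _, rfl⟩)
        exact lt_of_le_of_lt (infDist_le_dist_of_mem hz) hdz
      obtain ⟨w, hwK, φ, hφ, hVlim⟩ := subseq_of_infDist hK hKne
        (fun n => S (g (n + N) - h) (u (n + N))) hVd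
      refine ⟨w, ?_, ?_⟩
      · exact ⟨fun n => g (φ n + N) - h, fun n => u (φ n + N),
          fun n => (hmem (φ n)).1, hGinf.comp hφ.tendsto_atTop,
          fun n => huB _, hVlim⟩
      · have h1 : Tendsto (fun n => S h (S (g (φ n + N) - h) (u (φ n + N))))
            atTop (𝓝 (S h w)) := ((hScont h hhC).tendsto w).comp hVlim
        have h2 : ∀ n, S h (S (g (φ n + N) - h) (u (φ n + N))) =
            S (g (φ n + N)) (u (φ n + N)) := by
          intro n
          have heq : h + (g (φ n + N) - h) = g (φ n + N) := by abel
          conv_rhs => rw [← heq]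
          rw [hSadd h hhC (g (φ n + N) - h) (hSigC (hmem (φ n)).1)]
          rfl
        have h3 : Tendsto (fun n => S (g (φ n + N)) (u (φ n + N))) atTop (𝓝 u₀) :=
          hlim.comp ((tendsto_add_atTop_nat N).comp hφ.tendsto_atTop)
        exact tendsto_nhds_unique (h1.congr h2) h3
  -- assembly
  set U := ⋃ B ∈ Bor, omegaSet S Sig B with hU
  have hUK : U ⊆ K := Set.iUnion₂_subset homega_K
  have hAK : closure U ⊆ K := closure_minimal hUK hK.isClosed
  have hcomp : IsCompact (closure U) := hK.of_isClosed_subset isClosed_closure hAK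
  have hinvA : ∀ h ∈ C, S h '' closure U = closure U := by
    intro h hhC
    have hImU : S h '' U = U := by
      rw [hU, Set.image_iUnion₂]
      exact Set.iUnion₂_congr (fun B hB => hSinv B hB h hhC)
    apply Set.Subset.antisymm
    · refine (image_closure_subset_closure_image (hScont h hhC)).trans ?_
      rw [hImU]
    · intro a ha
      obtain ⟨as, hasU, haslim⟩ := mem_closure_iff_seq_limit.1 ha
      have hb : ∀ n, ∃ b, b ∈ U ∧ S h b = as n := by
        intro n
        obtain ⟨B, hB, hmemB⟩ := Set.mem_iUnion₂.1 (hasU n)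
        rw [← hSinv B hB h hhC] at hmemB
        obtain ⟨b, hbω, hbeq⟩ := hmemB
        exact ⟨b, Set.mem_iUnion₂.2 ⟨B, hB, hbω⟩, hbeq⟩
      choose b hbU hbeq using hb
      have hbK : ∀ n, b n ∈ K := fun n => hUK (hbU n)
      obtain ⟨x, hxK, φ, hφ, hblim⟩ := hK.tendsto_subseq hbK
      have hxA : x ∈ closure U :=
        mem_closure_of_tendsto hblim (Eventually.of_forall (fun n => hbU (φ n)))
      refine ⟨x, hxA, ?_⟩
      have h1 : Tendsto (fun n => S h (b (φ n))) atTop (𝓝 (S h x)) :=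
        ((hScont h hhC).tendsto x).comp hblim
      have h2 : Tendsto (fun n => as (φ n)) atTop (𝓝 a) :=
        haslim.comp hφ.tendsto_atTop
      exact tendsto_nhds_unique (h1.congr (fun n => hbeq (φ n))) h2
  have hattrA : IsAttractingSet S Sig Bor (closure U) := by
    by_contra hna
    simp only [IsAttractingSet] at hna
    push_neg at hna
    obtain ⟨B, hB, ε, hε, hcon⟩ := hna
    have hchoice : ∀ n : ℕ, ∃ gp : (EuclideanSpace ℝ (Fin m)) × Φ, gp.1 ∈ Sig ∧
        infDist gp.1 (frontier Sig) ≥ (n : ℝ) + 1 ∧ gp.2 ∈ B ∧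
        S gp.1 gp.2 ∉ thickening ε (closure U) := by
      intro n
      obtain ⟨h, hhSig, hhinf, hns⟩ := hcon ((n : ℝ) + 1) (by positivity)
      obtain ⟨y, hy, hyn⟩ := Set.not_subset.1 hns
      obtain ⟨x, hxB, rfl⟩ := hy
      exact ⟨(h, x), hhSig, hhinf, hxB, hyn⟩
    choose gp hSig1 hinf1 hB1 hnot1 using hchoice
    set g : ℕ → EuclideanSpace ℝ (Fin m) := fun n => (gp n).1 with hg
    set x : ℕ → Φ := fun n => (gp n).2 with hx
    have hKne : K.Nonempty := by
      obtain ⟨D, hD, hatt⟩ := hKattr B hB 1 one_pos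
      obtain ⟨n, hn⟩ : ∃ n : ℕ, D ≤ (n : ℝ) + 1 :=
        ⟨⌈D⌉₊, by linarith [Nat.le_ceil D]⟩
      obtain ⟨z, hz, -⟩ := mem_thickening_iff.1
        (hatt (g n) (hSig1 n) (le_trans hn (hinf1 n)) ⟨x n, hB1 n, rfl⟩)
      exact ⟨z, hz⟩
    have hVd : ∀ ε' : ℝ, 0 < ε' → ∃ M, ∀ n ≥ M, infDist (S (g n) (x n)) K < ε' := by
      intro ε' hε'
      obtain ⟨D, hD, hatt⟩ := hKattr B hB ε' hε'
      refine ⟨⌈D⌉₊, fun n hn => ?_⟩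
      have hcast : ((⌈D⌉₊ : ℕ) : ℝ) ≤ (n : ℝ) := Nat.cast_le.2 hn
      have hDn : D ≤ (n : ℝ) + 1 := by linarith [Nat.le_ceil D]
      obtain ⟨z, hz, hdz⟩ := mem_thickening_iff.1
        (hatt (g n) (hSig1 n) (le_trans hDn (hinf1 n)) ⟨x n, hB1 n, rfl⟩)
      exact lt_of_le_of_lt (infDist_le_dist_of_mem hz) hdz
    obtain ⟨u₀, hu₀K, φ, hφ, hulim⟩ := subseq_of_infDist hK hKne
      (fun n => S (g n) (x n)) hVd
    have hu₀A : u₀ ∈ closure U := by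
      apply subset_closure
      refine Set.mem_iUnion₂.2 ⟨B, hB, ?_⟩
      refine ⟨fun n => g (φ n), fun n => x (φ n), fun n => hSig1 _, ?_,
        fun n => hB1 _, hulim⟩
      have hlow : Tendsto (fun n : ℕ => (n : ℝ) + 1) atTop atTop :=
        tendsto_atTop_add_const_right atTop 1 tendsto_natCast_atTop_atTop
      refine tendsto_atTop_mono (fun n => ?_) hlow
      have : (n : ℝ) + 1 ≤ (φ n : ℝ) + 1 := by
        have h4 : n ≤ φ n := hφ.le_apply
        have h5 := (Nat.cast_le (α := ℝ)).2 h4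
        linarith
      exact le_trans this (hinf1 (φ n))
    obtain ⟨M, hM⟩ := (Metric.tendsto_atTop.1 hulim) ε hε
    refine hnot1 (φ M) (mem_thickening_iff.2 ⟨u₀, hu₀A, ?_⟩)
    exact hM M le_rfl
  exact ⟨hAK, hcomp, hinvA, hattrA⟩
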